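/- Let m, ℓ be nonzero complex numbers with m⁴ − (1 − m² − 2m⁴ − m⁶ + m⁸)ℓ + m⁴ℓ² = 0 and m⁴ ≠ 1, 1 + m²ℓ ≠ 0, m² + ℓ ≠ 0. Define z = −(m² − m⁻²)/(1 + m²ℓ) and w = (m² + ℓ)/(m² − m⁻²). Then z and w satisfy the deformed gluing equations z²w²z''w'' = 1 and z·w·z'' = −m², where z'' = 1 − z⁻¹ and w'' = 1 − w⁻¹, together with z⁻²·z''⁻¹ = ℓ. -/

import Mathlib

theorem fig8_deformed_gluing (m ℓ : ℂ) (hm : m ≠ 0) (hl : ℓ ≠ 0)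
    (hA : m ^ 4 - (1 - m ^ 2 - 2 * m ^ 4 - m ^ 6 + m ^ 8) * ℓ + m ^ 4 * ℓ ^ 2 = 0)
    (hm4 : m ^ 4 ≠ 1) (h1 : 1 + m ^ 2 * ℓ ≠ 0) (h2 : m ^ 2 + ℓ ≠ 0) :
    let z : ℂ := -(m ^ 2 - m⁻¹ ^ 2) / (1 + m ^ 2 * ℓ)
    let w : ℂ := (m ^ 2 + ℓ) / (m ^ 2 - m⁻¹ ^ 2)
    let z'' : ℂ := 1 - z⁻¹
    let w'' : ℂ := 1 - w⁻¹
    z ^ 2 * w ^ 2 * z'' * w'' = 1 ∧ z * w * z'' = -m ^ 2 ∧ z⁻¹ ^ 2 * z''⁻¹ = ℓ := by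
  intro z w z'' w''
  have hzd : z = -(m ^ 2 - m⁻¹ ^ 2) / (1 + m ^ 2 * ℓ) := rfl
  have hwd : w = (m ^ 2 + ℓ) / (m ^ 2 - m⁻¹ ^ 2) := rfl
  have hz''d : z'' = 1 - z⁻¹ := rfl
  have hw''d : w'' = 1 - w⁻¹ := rfl
  clear_value z'' w'' z w
  have h4 : m ^ 4 - 1 ≠ 0 := sub_ne_zero.mpr hm4
  have hd : m ^ 2 - m⁻¹ ^ 2 ≠ 0 := by
    intro h
    apply hm4
    field_simp at h
    linear_combination h
  have hz : z ≠ 0 := by rw [hzd]; exact div_ne_zero (neg_ne_zero.mpr hd) h1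
  have hw : w ≠ 0 := by rw [hwd]; exact div_ne_zero h2 hd
  have hz2 : z = (1 - m ^ 4) / (m ^ 2 * (1 + m ^ 2 * ℓ)) := by
    rw [hzd]; field_simp; ring
  have hw2 : w = m ^ 2 * (m ^ 2 + ℓ) / (m ^ 4 - 1) := by
    rw [hwd]; rw [div_eq_div_iff hd h4]; field_simp
  have key2 : w * (z - 1) = -m ^ 2 := by
    rw [hz2, hw2]
    field_simp
    linear_combination (-1) * hA
  have hz1 : z - 1 ≠ 0 := by
    intro h
    apply hm
    have hsq : m ^ 2 = 0 := by linear_combination key2 - w * h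
    exact pow_eq_zero_iff (two_ne_zero) |>.mp hsq
  have hzz : z'' = (z - 1) / z := by rw [hz''d]; field_simp
  have e2 : z * w * z'' = -m ^ 2 := by
    rw [hzz]
    field_simp
    linear_combination key2
  have key3 : ℓ * (z * (z - 1)) = 1 := by
    rw [hz2]
    have : 1 + ℓ * m ^ 2 ≠ 0 := by rwa [mul_comm]
    field_simp
    linear_combination -hA
  have key4 : w * (w - 1) = ℓ := by
    rw [hw2]
    field_simp
    linear_combination hA
  have key1 : z * w * (z - 1) * (w - 1) = 1 := by
    linear_combination z * (z - 1) * key4 + key3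
  refine ⟨?_, e2, ?_⟩
  · rw [hzz, hw''d]
    field_simp
    linear_combination key1
  · have hl2 : ℓ = (z * (z - 1))⁻¹ := eq_inv_of_mul_eq_one_left key3
    rw [hzz, hl2]
    field_simp
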